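/- Let A be a commutative pointed monoid and I an ideal of A with a minimal primary decomposition I = q₁ ∩ ⋯ ∩ qₙ where qᵢ is pᵢ-primary. Then {p₁, …, pₙ} is exactly the set of prime ideals of A of the form √(I : a) for some a ∈ A, where (I : a) = {b ∈ A : ab ∈ I}; in particular this set is independent of the chosen minimal primary decomposition. Moreover, the minimal elements of {p₁, …, pₙ} with respect to inclusion are exactly the prime ideals of A that contain I and are minimal among the primes containing I. -/

import Mathlib

/-- An ideal of a commutative pointed monoid `A`. -/
def IsMIdeal {A : Type*} [CommMonoidWithZero A] (I : Set A) : Prop :=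
  (0 : A) ∈ I ∧ ∀ a x : A, x ∈ I → a * x ∈ I

/-- A prime ideal of a commutative pointed monoid. -/
def IsMPrime {A : Type*} [CommMonoidWithZero A] (p : Set A) : Prop :=
  IsMIdeal p ∧ p ≠ Set.univ ∧ ∀ a b : A, a * b ∈ p → a ∈ p ∨ b ∈ p

/-- A primary ideal of a commutative pointed monoid. -/
def IsMPrimary {A : Type*} [CommMonoidWithZero A] (q : Set A) : Prop :=
  IsMIdeal q ∧ q ≠ Set.univ ∧ ∀ x y : A, x * y ∈ q → x ∈ q ∨ ∃ n : ℕ, 1 ≤ n ∧ y ^ n ∈ q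

/-- The radical of an ideal: all `a` with `a ^ n ∈ I` for some `n ≥ 1`. -/
def mRadical {A : Type*} [CommMonoidWithZero A] (I : Set A) : Set A :=
  {a : A | ∃ n : ℕ, 1 ≤ n ∧ a ^ n ∈ I}

section MyHelpers
variable {A : Type*} [CommMonoidWithZero A]

lemma my_ideal_eq_univ_of_one_mem {P : Set A} (hP : IsMIdeal P) (h : (1 : A) ∈ P) :
    P = Set.univ :=
  Set.eq_univ_of_forall fun a => by simpa using hP.2 a 1 h

lemma my_prime_pow_mem {P : Set A} (hP : IsMPrime P) {a : A} {n : ℕ}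
    (h : a ^ n ∈ P) : a ∈ P := by
  induction n with
  | zero => exact absurd (my_ideal_eq_univ_of_one_mem hP.1 (by simpa using h)) hP.2.1
  | succ n ih =>
    rw [pow_succ] at h
    rcases hP.2.2 _ _ h with h' | h'
    · exact ih h'
    · exact h'

lemma my_primary_radical_prime {q : Set A} (hq : IsMPrimary q) : IsMPrime (mRadical q) := by
  refine ⟨⟨⟨1, le_refl 1, by simpa using hq.1.1⟩, ?_⟩, ?_, ?_⟩
  · rintro a x ⟨m, hm, hx⟩
    exact ⟨m, hm, by rw [mul_pow]; exact hq.1.2 _ _ hx⟩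
  · intro h
    have h1 : (1 : A) ∈ mRadical q := h ▸ Set.mem_univ 1
    obtain ⟨m, _, hm⟩ := h1
    rw [one_pow] at hm
    exact hq.2.1 (my_ideal_eq_univ_of_one_mem hq.1 hm)
  · rintro a b ⟨m, hm, hab⟩
    rw [mul_pow] at hab
    rcases hq.2.2 _ _ hab with h' | ⟨k, hk, h'⟩
    · exact Or.inl ⟨m, hm, h'⟩
    · rw [← pow_mul] at h'
      exact Or.inr ⟨m * k, Nat.one_le_iff_ne_zero.mpr (by positivity), h'⟩

lemma my_radical_subset_prime {P q : Set A} (hP : IsMPrime P) (h : q ⊆ P) :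
    mRadical q ⊆ P := by
  rintro a ⟨m, _, hm⟩
  exact my_prime_pow_mem hP (h hm)

lemma my_finset_prod_mem_prime {ι : Type*} {P : Set A} (hP : IsMPrime P)
    (x : ι → A) (s : Finset ι) (h : (∏ i ∈ s, x i) ∈ P) : ∃ i ∈ s, x i ∈ P := by
  classical
  induction s using Finset.induction_on with
  | empty => exact absurd (my_ideal_eq_univ_of_one_mem hP.1 (by simpa using h)) hP.2.1
  | insert _ _ hi ih =>
    rw [Finset.prod_insert hi] at h
    rcases hP.2.2 _ _ h with h' | h'
    · exact ⟨_, Finset.mem_insert_self _ _, h'⟩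
    · obtain ⟨i, hi', hx⟩ := ih h'
      exact ⟨i, Finset.mem_insert_of_mem hi', hx⟩

lemma my_exists_subset_of_iInter_subset {ι : Type*} [Fintype ι] {P : Set A}
    (hP : IsMPrime P) (J : ι → Set A) (hJ : ∀ i, IsMIdeal (J i))
    (h : (⋂ i, J i) ⊆ P) : ∃ i, J i ⊆ P := by
  by_contra hc
  push_neg at hc
  choose x hx hxP using fun i => Set.not_subset.mp (hc i)
  have hprod : (∏ i, x i) ∈ ⋂ i, J i := by
    refine Set.mem_iInter.mpr fun i => ?_
    classical
    rw [← Finset.mul_prod_erase Finset.univ x (Finset.mem_univ i), mul_comm]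
    exact (hJ i).2 _ _ (hx i)
  obtain ⟨i, _, hxi⟩ := my_finset_prod_mem_prime hP x Finset.univ (h hprod)
  exact hxP i hxi

lemma my_radical_colon_eq (n : ℕ) (q p : Fin n → Set A)
    (hprimary : ∀ i, IsMPrimary (q i)) (hrad : ∀ i, mRadical (q i) = p i) (a : A) :
    mRadical {b : A | a * b ∈ ⋂ i, q i} = ⋂ i, ⋂ (_ : a ∉ q i), p i := by
  ext b
  simp only [mRadical, Set.mem_setOf_eq, Set.mem_iInter]
  constructor
  · rintro ⟨m, hm, hmem⟩ i hi
    rw [← hrad i]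
    rcases (hprimary i).2.2 a (b ^ m) (hmem i) with h | ⟨k, hk, h⟩
    · exact absurd h hi
    · rw [← pow_mul] at h
      exact ⟨m * k, Nat.one_le_iff_ne_zero.mpr (by positivity), h⟩
  · intro hb
    have key : ∀ i, ∃ k, 1 ≤ k ∧ a * b ^ k ∈ q i := by
      intro i
      by_cases hi : a ∈ q i
      · exact ⟨1, le_refl 1, by rw [pow_one, mul_comm]; exact (hprimary i).1.2 b a hi⟩
      · obtain ⟨k, hk, h⟩ : b ∈ mRadical (q i) := (hrad i).symm ▸ hb i hi
        exact ⟨k, hk, (hprimary i).1.2 a _ h⟩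
    choose k hk1 hkmem using key
    refine ⟨(∑ j, k j) + 1, by omega, fun i => ?_⟩
    have hle : k i ≤ (∑ j, k j) + 1 :=
      le_trans (Finset.single_le_sum (fun _ _ => Nat.zero_le _) (Finset.mem_univ i))
        (Nat.le_succ _)
    have heq : a * b ^ ((∑ j, k j) + 1) = b ^ ((∑ j, k j) + 1 - k i) * (a * b ^ k i) := by
      rw [mul_comm a (b ^ k i), ← mul_assoc, ← pow_add, Nat.sub_add_cancel hle, mul_comm]
    rw [heq]
    exact (hprimary i).1.2 _ _ (hkmem i)

end MyHelpers

/-- For a minimal primary decomposition `I = q₁ ∩ ⋯ ∩ qₙ` with `qᵢ` being `pᵢ`-primary,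
the set `{p₁, …, pₙ}` is exactly the set of primes of the form `√(I : a)`, `a ∈ A`
(hence independent of the decomposition), and its minimal elements are exactly the
primes containing `I` that are minimal among the primes containing `I`. -/
theorem associated_primes_of_minimal_primary_decomposition
    {A : Type*} [CommMonoidWithZero A] (n : ℕ) (q p : Fin n → Set A)
    (hprimary : ∀ i, IsMPrimary (q i)) (hrad : ∀ i, mRadical (q i) = p i)
    (hdistinct : Function.Injective p)
    (hmin : ∀ i, ¬ (⋂ j, ⋂ (_ : j ≠ i), q j) ⊆ q i)
    (I : Set A) (hI : I = ⋂ i, q i) :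
    ({P : Set A | ∃ i, P = p i} =
      {P : Set A | IsMPrime P ∧ ∃ a : A, P = mRadical {b : A | a * b ∈ I}}) ∧
    ({P : Set A | (∃ i, P = p i) ∧ ∀ Q : Set A, (∃ i, Q = p i) → Q ⊆ P → Q = P} =
      {P : Set A | IsMPrime P ∧ I ⊆ P ∧
        ∀ Q : Set A, IsMPrime Q → I ⊆ Q → Q ⊆ P → Q = P}) := by
  classical
  have hp_prime : ∀ i, IsMPrime (p i) := fun i =>
    hrad i ▸ my_primary_radical_prime (hprimary i)
  have hqp : ∀ i, q i ⊆ p i := fun i x hx =>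
    (hrad i) ▸ ⟨1, le_refl 1, by simpa using hx⟩
  have hIp : ∀ i, I ⊆ p i := fun i x hx =>
    hqp i (Set.mem_iInter.mp (hI ▸ hx) i)
  have key : ∀ P : Set A, IsMPrime P → I ⊆ P → ∃ j, p j ⊆ P := by
    intro P hP hIP
    obtain ⟨j, hj⟩ := my_exists_subset_of_iInter_subset hP q (fun i => (hprimary i).1)
      (hI ▸ hIP)
    exact ⟨j, (hrad j) ▸ my_radical_subset_prime hP hj⟩
  constructor
  · ext P
    simp only [Set.mem_setOf_eq]
    constructor
    · rintro ⟨i, rfl⟩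
      obtain ⟨a, ha1, ha2⟩ := Set.not_subset.mp (hmin i)
      refine ⟨hp_prime i, a, ?_⟩
      rw [hI, my_radical_colon_eq n q p hprimary hrad a]
      ext x
      simp only [Set.mem_iInter]
      constructor
      · intro hx j hj
        rcases eq_or_ne j i with rfl | hne
        · exact hx
        · exact absurd (Set.mem_iInter₂.mp ha1 j hne) hj
      · intro hx
        exact hx i ha2
    · rintro ⟨hprime, a, rfl⟩
      have hcolon : mRadical {b : A | a * b ∈ I} = ⋂ i, ⋂ (_ : a ∉ q i), p i := by
        rw [hI]; exact my_radical_colon_eq n q p hprimary hrad a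
      set J : Fin n → Set A := fun i => ⋂ (_ : a ∉ q i), p i with hJdef
      have hJideal : ∀ i, IsMIdeal (J i) := by
        intro i
        by_cases hi : a ∈ q i
        · have hJu : J i = Set.univ := by simp [hJdef, hi]
          rw [hJu]
          exact ⟨Set.mem_univ 0, fun _ _ _ => Set.mem_univ _⟩
        · have hJp : J i = p i := by simp [hJdef, hi]
          rw [hJp]
          exact (hp_prime i).1
      obtain ⟨i, hi⟩ := my_exists_subset_of_iInter_subset hprime J hJideal
        (by rw [← hcolon])
      have hai : a ∉ q i := by
        intro hai
        have : J i = Set.univ := by simp [hJdef, hai]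
        exact hprime.2.1 (Set.eq_univ_of_univ_subset (this ▸ hi))
      have hJi : J i = p i := by simp [hJdef, hai]
      refine ⟨i, subset_antisymm ?_ (hJi ▸ hi)⟩
      rw [hcolon]
      exact Set.iInter_subset_of_subset i (Set.iInter_subset _ hai)
  · ext P
    simp only [Set.mem_setOf_eq]
    constructor
    · rintro ⟨⟨i, rfl⟩, hminP⟩
      refine ⟨hp_prime i, hIp i, fun Q hQ hIQ hQP => ?_⟩
      obtain ⟨j, hj⟩ := key Q hQ hIQ
      have hji := hminP (p j) ⟨j, rfl⟩ (hj.trans hQP)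
      exact subset_antisymm hQP (hji ▸ hj)
    · rintro ⟨hP, hIP, hminP⟩
      obtain ⟨j, hj⟩ := key P hP hIP
      have hPj : p j = P := hminP (p j) (hp_prime j) (hIp j) hj
      refine ⟨⟨j, hPj.symm⟩, ?_⟩
      rintro Q ⟨k, rfl⟩ hQP
      exact hminP (p k) (hp_prime k) (hIp k) hQP
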